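/- Let μ > 0 be non-integer, m = ⌈μ⌉, ν = m - μ, f defined on ℕ_a with a ∈ ℤ⁺. Then for all t ∈ ℕ_{a+m}: f(t) = ∑_{k=0}^{m-1} ((t-a)^(k)/k!)·Δ^k f(a) + (1/Γ(μ))·∑_{s=a+ν}^{t-μ} (t-s-1)^(μ-1)·Δ_*^μ f(s), where Δ_*^μ f(t) = (1/Γ(ν))·∑_{s=a}^{t-ν} (t-s-1)^(ν-1)·(Δ^m f)(s) is the Caputo-like fractional difference. -/

import Mathlib

open Finset

/-- Generalized falling factorial `t^(α) = Γ(t+1)/Γ(t-α+1)`. -/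
noncomputable def gff (t α : ℝ) : ℝ := Real.Gamma (t + 1) / Real.Gamma (t - α + 1)

/-- Forward difference operator `Δf(t) = f(t+1) - f(t)`. -/
def fdiff (f : ℝ → ℝ) : ℝ → ℝ := fun t => f (t + 1) - f t

/-- The ν-th fractional sum with base point `a`:
`Δ^{-ν} f(t) = (1/Γ(ν)) ∑_{s=a}^{t-ν} (t-s-1)^(ν-1) f(s)`, the sum running over
`s = a, a+1, ..., t-ν` (for `t ∈ ℕ_{a+ν}`, there are `t-ν-a+1` terms). -/
noncomputable def fsum (ν a : ℝ) (f : ℝ → ℝ) (t : ℝ) : ℝ :=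
  (1 / Real.Gamma ν) *
    ∑ j ∈ Finset.range ((⌊t - ν - a⌋).toNat + 1),
      gff (t - (a + j) - 1) (ν - 1) * f (a + j)

/-- The Caputo-like fractional difference `Δ_*^μ f = Δ^{-(⌈μ⌉-μ)} (Δ^{⌈μ⌉} f)`. -/
noncomputable def caputo (μ a : ℝ) (f : ℝ → ℝ) : ℝ → ℝ :=
  fsum ((⌈μ⌉₊ : ℝ) - μ) a (fdiff^[⌈μ⌉₊] f)

/-! ### Auxiliary lemmas -/

/-- Generalized binomial coefficient `binom (x-1+d) d` expressed via Gamma. -/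
noncomputable def Bc (x : ℝ) (d : ℕ) : ℝ :=
  Real.Gamma (x + d) / (Real.Gamma x * (d.factorial : ℝ))

lemma Bc_zero (x : ℝ) (hx : 0 < x) : Bc x 0 = 1 := by
  have h := Real.Gamma_pos_of_pos hx
  simp [Bc, h.ne']

lemma Bc_succ (x : ℝ) (hx : 0 < x) (d : ℕ) :
    ((d : ℝ) + 1) * Bc x (d + 1) = (x + d) * Bc x d := by
  have hxd : (0:ℝ) < x + d := by positivity
  have h1 : Real.Gamma (x + (d + 1 : ℕ)) = (x + d) * Real.Gamma (x + d) := by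
    push_cast
    rw [show x + ((d:ℝ) + 1) = (x + d) + 1 by ring, Real.Gamma_add_one hxd.ne']
  have h2 : ((d + 1 : ℕ).factorial : ℝ) = ((d:ℝ)+1) * (d.factorial : ℝ) := by
    rw [Nat.factorial_succ]; push_cast; ring
  have hd : ((d:ℝ)+1) ≠ 0 := by positivity
  have hf : (d.factorial : ℝ) ≠ 0 := by positivity
  have hg : Real.Gamma x ≠ 0 := (Real.Gamma_pos_of_pos hx).ne'
  rw [Bc, Bc, h1, h2]
  field_simp

/-- Chu–Vandermonde identity for generalized binomial coefficients. -/
lemma vand (x y : ℝ) (hx : 0 < x) (hy : 0 < y) (q : ℕ) :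
    ∑ d ∈ range (q + 1), Bc x (q - d) * Bc y d = Bc (x + y) q := by
  induction q with
  | zero => simp [Bc_zero x hx, Bc_zero y hy, Bc_zero (x+y) (by positivity)]
  | succ q ih =>
    have hq1 : ((q:ℝ) + 1) ≠ 0 := by positivity
    have key : ((q:ℝ) + 1) * ∑ d ∈ range (q + 1 + 1), Bc x (q + 1 - d) * Bc y d
        = ((q:ℝ) + 1) * Bc (x + y) (q + 1) := by
      rw [Finset.mul_sum]
      have split : ∀ d ∈ range (q + 1 + 1),
          ((q:ℝ) + 1) * (Bc x (q + 1 - d) * Bc y d)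
            = (((q + 1 - d : ℕ) : ℝ) * Bc x (q + 1 - d)) * Bc y d
              + ((d:ℝ) * Bc y d) * Bc x (q + 1 - d) := by
        intro d hd
        have hd' : d ≤ q + 1 := by simpa [Nat.lt_succ_iff] using Finset.mem_range.mp hd
        have : ((q + 1 - d : ℕ) : ℝ) = (q:ℝ) + 1 - (d:ℝ) := by
          push_cast [Nat.cast_sub hd']; ring
        rw [this]; ring
      rw [Finset.sum_congr rfl split, Finset.sum_add_distrib]
      have S1 : ∑ d ∈ range (q + 1 + 1),
          (((q + 1 - d : ℕ) : ℝ) * Bc x (q + 1 - d)) * Bc y d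
          = ∑ d ∈ range (q + 1), ((x + (q - d : ℕ)) * Bc x (q - d)) * Bc y d := by
        rw [Finset.sum_range_succ]
        simp only [Nat.sub_self, Nat.cast_zero, zero_mul, add_zero]
        refine Finset.sum_congr rfl fun d hd => ?_
        have hd' : d ≤ q := by simpa [Nat.lt_succ_iff] using Finset.mem_range.mp hd
        have h1 : q + 1 - d = (q - d) + 1 := by omega
        rw [h1]
        push_cast
        rw [show (((q - d : ℕ):ℝ) + 1) * Bc x ((q - d) + 1) * Bc y d
          = ((((q - d : ℕ):ℝ) + 1) * Bc x ((q - d) + 1)) * Bc y d by ring,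
          Bc_succ x hx (q - d)]
      have S2 : ∑ d ∈ range (q + 1 + 1), ((d:ℝ) * Bc y d) * Bc x (q + 1 - d)
          = ∑ d ∈ range (q + 1), ((y + (d:ℕ)) * Bc y d) * Bc x (q - d) := by
        rw [Finset.sum_range_succ']
        simp only [Nat.cast_zero, zero_mul]
        simp only [add_zero, zero_mul]
        refine Finset.sum_congr rfl fun d hd => ?_
        have h1 : q + 1 - (d + 1) = q - d := by omega
        rw [h1]
        push_cast
        rw [show ((d:ℝ) + 1) * Bc y (d + 1) * Bc x (q - d)
          = (((d:ℝ) + 1) * Bc y (d + 1)) * Bc x (q - d) by ring, Bc_succ y hy d]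
      rw [S1, S2, ← Finset.sum_add_distrib]
      have merge : ∀ d ∈ range (q + 1),
          ((x + (q - d : ℕ)) * Bc x (q - d)) * Bc y d
            + ((y + (d:ℕ)) * Bc y d) * Bc x (q - d)
          = (x + y + q) * (Bc x (q - d) * Bc y d) := by
        intro d hd
        have hd' : d ≤ q := by simpa [Nat.lt_succ_iff] using Finset.mem_range.mp hd
        have : ((q - d : ℕ) : ℝ) = (q:ℝ) - (d:ℝ) := by push_cast [Nat.cast_sub hd']; ring
        rw [this]; ring
      rw [Finset.sum_congr rfl merge, ← Finset.mul_sum, ih,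
        ← Bc_succ (x+y) (by positivity) q]
    exact mul_left_cancel₀ hq1 key

lemma Bc_nat (n d : ℕ) : Bc ((n:ℝ) + 1) d = ((n + d).choose d : ℝ) := by
  have h1 : Real.Gamma ((n:ℝ) + 1 + d) = ((n + d).factorial : ℝ) := by
    rw [show ((n:ℝ) + 1 + d) = ((n + d : ℕ) : ℝ) + 1 by push_cast; ring,
      Real.Gamma_nat_eq_factorial]
  have h2 : Real.Gamma ((n:ℝ) + 1) = (n.factorial : ℝ) := Real.Gamma_nat_eq_factorial n
  have h3 : (n + d).choose d * (d.factorial * n.factorial) = (n + d).factorial := by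
    have := Nat.choose_mul_factorial_mul_factorial (show d ≤ n + d by omega)
    simpa [Nat.add_sub_cancel, mul_comm, mul_left_comm, mul_assoc] using this
  rw [Bc, h1, h2]
  have hf : (n.factorial : ℝ) ≠ 0 := by positivity
  have hg : (d.factorial : ℝ) ≠ 0 := by positivity
  field_simp
  rw [← h3]
  push_cast
  ring

set_option maxRecDepth 10000 in
/-- Discrete Taylor / binomial transform for the shift. -/
lemma shift_eq (n : ℕ) : ∀ (f : ℝ → ℝ) (a : ℝ),
    f (a + n) = ∑ k ∈ range (n + 1), (n.choose k : ℝ) * fdiff^[k] f a := by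
  induction n with
  | zero => intro f a; simp
  | succ n ih =>
    intro f a
    have step : f (a + (n + 1 : ℕ)) = f ((a + 1) + n) := by
      push_cast; ring_nf
    rw [step, ih f (a + 1)]
    have conv1 : ∀ k ∈ range (n + 1),
        (n.choose k : ℝ) * fdiff^[k] f (a + 1)
        = (n.choose k : ℝ) * fdiff^[k] f a + (n.choose k : ℝ) * fdiff^[k + 1] f a := by
      intro k _
      have : fdiff^[k] f (a + 1) = fdiff^[k] f a + fdiff (fdiff^[k] f) a := by
        simp [fdiff]
      rw [this, show fdiff (fdiff^[k] f) a = fdiff^[k+1] f a by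
        rw [Function.iterate_succ_apply']]
      ring
    rw [Finset.sum_congr rfl conv1, Finset.sum_add_distrib]
    rw [Finset.sum_range_succ' (fun k => ((n+1).choose k : ℝ) * fdiff^[k] f a) (n + 1)]
    have pasc : ∀ i ∈ range (n + 1),
        (((n+1).choose (i+1) : ℕ) : ℝ) * fdiff^[i+1] f a
        = (n.choose i : ℝ) * fdiff^[i+1] f a + (n.choose (i+1) : ℝ) * fdiff^[i+1] f a := by
      intro i _
      rw [Nat.choose_succ_succ]
      push_cast; ring
    rw [Finset.sum_congr rfl pasc, Finset.sum_add_distrib]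
    have last : ∑ i ∈ range (n + 1), (n.choose (i+1) : ℝ) * fdiff^[i+1] f a
        = ∑ k ∈ range (n + 1), (n.choose k : ℝ) * fdiff^[k] f a
          - (n.choose 0 : ℝ) * fdiff^[0] f a := by
      have h0 := Finset.sum_range_succ' (fun k => (n.choose k : ℝ) * fdiff^[k] f a) (n + 1)
      have h1 := Finset.sum_range_succ (fun k => (n.choose k : ℝ) * fdiff^[k] f a) (n + 1)
      simp only [Nat.choose_succ_self, Nat.cast_zero, zero_mul, add_zero] at h1
      rw [h1] at h0
      linarith [h0]
    rw [last]
    simp only [Function.iterate_zero, id_eq, Nat.choose_zero_right, Nat.cast_one,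
      Nat.choose_self]
    ring

/-- Triangular sum swap. -/
lemma swap_tri {M : Type*} [AddCommMonoid M] (n : ℕ) (F : ℕ → ℕ → M) :
    ∑ i ∈ range (n + 1), ∑ p ∈ range (i + 1), F i p
      = ∑ p ∈ range (n + 1), ∑ i ∈ Ico p (n + 1), F i p := by
  have h := Finset.sum_Ico_Ico_comm 0 (n + 1) (fun p i => F i p)
  simp only [Finset.range_eq_Ico]
  exact h.symm

/-- Nat-cast Chu–Vandermonde in the form needed below. -/
lemma Nident (m' r q : ℕ) :
    ∑ e ∈ range (q + 1), ((m' + (q - e)).choose (q - e) : ℝ) * (((r + e).choose r : ℕ) : ℝ)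
      = ((m' + r + 1 + q).choose q : ℝ) := by
  have hv := vand ((m':ℝ) + 1) ((r:ℝ) + 1) (by positivity) (by positivity) q
  have conv : ∀ e ∈ range (q + 1),
      Bc ((m':ℝ) + 1) (q - e) * Bc ((r:ℝ) + 1) e
        = ((m' + (q - e)).choose (q - e) : ℝ) * (((r + e).choose r : ℕ) : ℝ) := by
    intro e he
    rw [Bc_nat, Bc_nat]
    congr 2
    have := Nat.choose_symm (show e ≤ r + e by omega)
    simpa [Nat.add_sub_cancel] using this.symm
  rw [← Finset.sum_congr rfl conv, hv,
    show (m':ℝ) + 1 + ((r:ℝ) + 1) = ((m' + r + 1 : ℕ) : ℝ) + 1 by push_cast; ring,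
    Bc_nat]

lemma gff_eq (x : ℝ) (hx : 0 < x) (d : ℕ) :
    gff (x + d - 1) (x - 1) = Real.Gamma (x + d) / (d.factorial : ℝ) := by
  unfold gff
  rw [show x + (d:ℝ) - 1 + 1 = x + d by ring,
    show x + (d:ℝ) - 1 - (x - 1) + 1 = (d:ℝ) + 1 by ring,
    Real.Gamma_nat_eq_factorial]

lemma gff_choose (n k : ℕ) (hk : k ≤ n) :
    gff (n:ℝ) (k:ℝ) / (k.factorial : ℝ) = (n.choose k : ℝ) := by
  unfold gff
  rw [show ((n:ℝ) - k + 1) = ((n - k : ℕ):ℝ) + 1 by push_cast [Nat.cast_sub hk]; ring,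
    Real.Gamma_nat_eq_factorial, Real.Gamma_nat_eq_factorial]
  have h3 := Nat.choose_mul_factorial_mul_factorial hk
  have h1 : ((n - k).factorial : ℝ) ≠ 0 := by positivity
  have h2 : ((k).factorial : ℝ) ≠ 0 := by positivity
  field_simp
  rw [← h3]
  push_cast
  ring

theorem stmt4 (μ ν : ℝ) (hμ : 0 < μ) (hni : ∀ n : ℤ, μ ≠ n) (m : ℕ)
    (hm : m = ⌈μ⌉₊) (hν : ν = m - μ) (f : ℝ → ℝ) (a j : ℕ) (t : ℝ)
    (ht : t = a + m + j) :
    f t =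
      (∑ k ∈ Finset.range m, gff (t - a) k / (k.factorial : ℝ) * fdiff^[k] f a) +
        (1 / Real.Gamma μ) *
          ∑ i ∈ Finset.range (j + 1),
            gff (t - (a + ν + i) - 1) (μ - 1) * caputo μ a f (a + ν + i) := by
  -- basic positivity facts
  have hm1 : 1 ≤ m := by
    have : 0 < ⌈μ⌉₊ := Nat.ceil_pos.mpr hμ
    omega
  have hμm : μ ≤ (m:ℝ) := by rw [hm]; exact Nat.le_ceil μ
  have hμne : μ ≠ (m:ℝ) := by simpa using hni (m : ℤ)
  have hνpos : 0 < ν := by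
    rw [hν]
    rcases lt_or_eq_of_le hμm with h | h
    · linarith
    · exact absurd h hμne
  have hμν : μ + ν = (m:ℝ) := by rw [hν]; ring
  have hΓν : Real.Gamma ν ≠ 0 := (Real.Gamma_pos_of_pos hνpos).ne'
  have hΓμ : Real.Gamma μ ≠ 0 := (Real.Gamma_pos_of_pos hμ).ne'
  obtain ⟨m', rfl⟩ : ∃ m', m = m' + 1 := ⟨m - 1, by omega⟩
  set X : ℕ → ℝ := fun k => fdiff^[k] f (a:ℝ) with hX
  set D : ℕ → ℝ := fun p => fdiff^[m' + 1] f ((a:ℝ) + p) with hD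
  -- EqA : first sum
  have EqA : ∀ k ∈ range (m' + 1),
      gff (t - a) k / (k.factorial : ℝ) * fdiff^[k] f a
        = ((m' + 1 + j).choose k : ℝ) * X k := by
    intro k hk
    have hk' : k ≤ m' + 1 + j := by
      have := Finset.mem_range.mp hk; omega
    have hta : t - (a:ℝ) = ((m' + 1 + j : ℕ) : ℝ) := by rw [ht]; push_cast; ring
    rw [hta, gff_choose _ _ hk']
  -- EqB : second sum equals the middle form
  have EqB : (1 / Real.Gamma μ) *
      ∑ i ∈ range (j + 1),
        gff (t - (a + ν + i) - 1) (μ - 1) * caputo μ a f (a + ν + i)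
      = ∑ p ∈ range (j + 1), ((m' + (j - p)).choose (j - p) : ℝ) * D p := by
    -- caputo values
    have hcap : ∀ i : ℕ, caputo μ a f ((a:ℝ) + ν + i)
        = ∑ p ∈ range (i + 1), Bc ν (i - p) * D p := by
      intro i
      rw [caputo, ← hm, ← hν]
      unfold fsum
      rw [show ((a:ℝ) + ν + i - ν - a) = ((i:ℕ):ℝ) by push_cast; ring]
      rw [Int.floor_natCast]
      simp only [Int.toNat_natCast]
      rw [Finset.mul_sum]
      refine Finset.sum_congr rfl fun p hp => ?_
      have hpi : p ≤ i := by
        have := Finset.mem_range.mp hp; omega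
      rw [show ((a:ℝ) + ν + i - (a + p) - 1) = ν + ((i - p : ℕ):ℝ) - 1 by
        push_cast [Nat.cast_sub hpi]; ring]
      rw [gff_eq ν hνpos (i - p)]
      simp only [hD, Bc]
      ring
    have hout : ∀ i ∈ range (j + 1),
        gff (t - (a + ν + i) - 1) (μ - 1)
          = Real.Gamma (μ + ((j - i : ℕ):ℝ)) / ((j - i).factorial : ℝ) := by
      intro i hi
      have hij : i ≤ j := by
        have := Finset.mem_range.mp hi; omega
      rw [show (t - (a + ν + i) - 1) = μ + ((j - i : ℕ):ℝ) - 1 by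
        rw [ht, hν]; push_cast [Nat.cast_sub hij]; ring]
      exact gff_eq μ hμ (j - i)
    have step1 : (1 / Real.Gamma μ) *
        ∑ i ∈ range (j + 1),
          gff (t - (a + ν + i) - 1) (μ - 1) * caputo μ a f (a + ν + i)
        = ∑ i ∈ range (j + 1), ∑ p ∈ range (i + 1),
            Bc μ (j - i) * (Bc ν (i - p) * D p) := by
      rw [Finset.mul_sum]
      refine Finset.sum_congr rfl fun i hi => ?_
      rw [hout i hi, hcap i, Finset.mul_sum, Finset.mul_sum]
      refine Finset.sum_congr rfl fun p hp => ?_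
      simp only [Bc]
      ring
    rw [step1, swap_tri j (fun i p => Bc μ (j - i) * (Bc ν (i - p) * D p))]
    refine Finset.sum_congr rfl fun p hp => ?_
    have hpj : p ≤ j := by
      have := Finset.mem_range.mp hp; omega
    rw [Finset.sum_Ico_eq_sum_range]
    rw [show j + 1 - p = (j - p) + 1 by omega]
    have conv : ∀ e ∈ range ((j - p) + 1),
        Bc μ (j - (p + e)) * (Bc ν ((p + e) - p) * D p)
          = (Bc μ ((j - p) - e) * Bc ν e) * D p := by
      intro e he
      rw [show j - (p + e) = (j - p) - e by omega, show (p + e) - p = e by omega]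
      ring
    rw [Finset.sum_congr rfl conv, ← Finset.sum_mul, vand μ ν hμ hνpos (j - p)]
    rw [hμν, show (((m' + 1 : ℕ)):ℝ) = ((m':ℕ):ℝ) + 1 by push_cast; ring, Bc_nat]
  -- EqC : discrete Taylor identity
  have EqC : f t = (∑ k ∈ range (m' + 1), ((m' + 1 + j).choose k : ℝ) * X k)
      + ∑ p ∈ range (j + 1), ((m' + (j - p)).choose (j - p) : ℝ) * D p := by
    have h1 : f t = ∑ k ∈ range (m' + 1 + j + 1), ((m' + 1 + j).choose k : ℝ) * X k := by
      rw [ht, show ((a:ℝ) + (m' + 1 : ℕ) + j) = (a:ℝ) + ((m' + 1 + j : ℕ):ℝ) by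
        push_cast; ring]
      exact shift_eq (m' + 1 + j) f a
    have h2 : ∑ k ∈ range (m' + 1 + j + 1), ((m' + 1 + j).choose k : ℝ) * X k
        = ∑ k ∈ range (m' + 1), ((m' + 1 + j).choose k : ℝ) * X k
          + ∑ k ∈ Ico (m' + 1) (m' + 1 + j + 1), ((m' + 1 + j).choose k : ℝ) * X k := by
      rw [Finset.range_eq_Ico,
        ← Finset.sum_Ico_consecutive _ (by omega : 0 ≤ m' + 1)
          (by omega : m' + 1 ≤ m' + 1 + j + 1), ← Finset.range_eq_Ico]
    have h3 : ∑ k ∈ Ico (m' + 1) (m' + 1 + j + 1), ((m' + 1 + j).choose k : ℝ) * X k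
        = ∑ r ∈ range (j + 1), ((m' + 1 + j).choose (m' + 1 + r) : ℝ) * X (m' + 1 + r) := by
      rw [Finset.sum_Ico_eq_sum_range, show m' + 1 + j + 1 - (m' + 1) = j + 1 by omega]
    have h4 : ∑ p ∈ range (j + 1), ((m' + (j - p)).choose (j - p) : ℝ) * D p
        = ∑ r ∈ range (j + 1), ((m' + 1 + j).choose (m' + 1 + r) : ℝ) * X (m' + 1 + r) := by
      have hDexp : ∀ p : ℕ, D p
          = ∑ r ∈ range (p + 1), (p.choose r : ℝ) * X (m' + 1 + r) := by
        intro p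
        rw [hD]
        simp only
        rw [shift_eq p (fdiff^[m' + 1] f) a]
        refine Finset.sum_congr rfl fun r _ => ?_
        rw [hX]
        simp only
        have hiter : fdiff^[m' + 1 + r] f = fdiff^[r] (fdiff^[m' + 1] f) := by
          rw [show m' + 1 + r = r + (m' + 1) by omega]
          exact Function.iterate_add_apply fdiff r (m' + 1) f
        rw [hiter]
      have expand : ∀ p ∈ range (j + 1),
          ((m' + (j - p)).choose (j - p) : ℝ) * D p
            = ∑ r ∈ range (p + 1),
                ((m' + (j - p)).choose (j - p) : ℝ) * ((p.choose r : ℝ) * X (m' + 1 + r)) := by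
        intro p _
        rw [hDexp p, Finset.mul_sum]
      rw [Finset.sum_congr rfl expand,
        swap_tri j (fun p r => ((m' + (j - p)).choose (j - p) : ℝ)
          * ((p.choose r : ℝ) * X (m' + 1 + r)))]
      refine Finset.sum_congr rfl fun r hr => ?_
      have hrj : r ≤ j := by
        have := Finset.mem_range.mp hr; omega
      rw [Finset.sum_Ico_eq_sum_range, show j + 1 - r = (j - r) + 1 by omega]
      have conv : ∀ e ∈ range ((j - r) + 1),
          ((m' + (j - (r + e))).choose (j - (r + e)) : ℝ)
              * (((r + e).choose r : ℝ) * X (m' + 1 + r))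
            = (((m' + ((j - r) - e)).choose ((j - r) - e) : ℝ)
                * (((r + e).choose r : ℕ) : ℝ)) * X (m' + 1 + r) := by
        intro e he
        rw [show j - (r + e) = (j - r) - e by omega]
        push_cast
        ring
      rw [Finset.sum_congr rfl conv, ← Finset.sum_mul, Nident m' r (j - r)]
      congr 2
      rw [show m' + r + 1 + (j - r) = m' + 1 + j by omega,
        show j - r = m' + 1 + j - (m' + 1 + r) by omega,
        Nat.choose_symm (by omega : m' + 1 + r ≤ m' + 1 + j)]
    rw [h1, h2, h3, ← h4]
  rw [Finset.sum_congr rfl EqA, EqB]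
  exact EqC
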